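/- Let h : ℝ → ℝ be continuous and monotone nondecreasing with h(x) → +∞ as x → +∞ and h(x) → −∞ as x → −∞; let m_h(x) = ∫_0^x h(s) ds; let t ≥ 1, x_1, …, x_t ∈ [0,1]^d, and y_1, …, y_t ∈ [0,1]. Then the function H_h(θ) = ∑_{i=1}^t ( y_i·⟨x_i, θ⟩ − m_h(⟨x_i, θ⟩) ) attains a global maximum: there exists θ̂ ∈ ℝ^d such that H_h(θ) ≤ H_h(θ̂) for all θ ∈ ℝ^d. -/

import Mathlib

open Filter intervalIntegral MeasureTheory

section
variable (h : ℝ → ℝ)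

lemma aux_q_atTop (hc : Continuous h) (htop : Tendsto h atTop atTop) :
    Tendsto (fun s : ℝ => |s| - ∫ u in (0:ℝ)..s, h u) atTop atBot := by
  have hi : ∀ a b : ℝ, IntervalIntegrable h volume a b := fun a b =>
    hc.intervalIntegrable a b
  obtain ⟨A, hA⟩ := eventually_atTop.mp (htop.eventually (eventually_ge_atTop (2:ℝ)))
  set A' := max A 0 with hA'
  have hA'0 : (0:ℝ) ≤ A' := le_max_right _ _
  have key : ∀ z : ℝ, A' ≤ z →
      |z| - ∫ u in (0:ℝ)..z, h u ≤ -z + (2 * A' - ∫ u in (0:ℝ)..A', h u) := by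
    intro z hz
    have hsplit : (∫ u in (0:ℝ)..A', h u) + ∫ u in A'..z, h u = ∫ u in (0:ℝ)..z, h u :=
      integral_add_adjacent_intervals (hi 0 A') (hi A' z)
    have hlow : 2 * (z - A') ≤ ∫ u in A'..z, h u := by
      have := integral_mono_on hz (_root_.intervalIntegrable_const (c := (2:ℝ))) (hi A' z)
        (fun s hs => hA s (le_trans (le_max_left _ _) hs.1))
      simpa [mul_comm] using this
    have habs : |z| = z := abs_of_nonneg (le_trans hA'0 hz)
    nlinarith [hsplit, hlow]
  have hlim : Tendsto (fun z : ℝ => -z + (2 * A' - ∫ u in (0:ℝ)..A', h u)) atTop atBot :=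
    (tendsto_neg_atBot_iff.mpr tendsto_id).atBot_add tendsto_const_nhds
  exact tendsto_atBot_mono' _ (eventually_atTop.mpr ⟨A', key⟩) hlim

lemma aux_q_atBot (hc : Continuous h) (hbot : Tendsto h atBot atBot) :
    Tendsto (fun s : ℝ => |s| - ∫ u in (0:ℝ)..s, h u) atBot atBot := by
  have hi : ∀ a b : ℝ, IntervalIntegrable h volume a b := fun a b =>
    hc.intervalIntegrable a b
  obtain ⟨B, hB⟩ := eventually_atBot.mp (hbot.eventually (eventually_le_atBot (-2:ℝ)))
  set B' := min B 0 with hB'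
  have hB'0 : B' ≤ 0 := min_le_right _ _
  have key : ∀ z : ℝ, z ≤ B' →
      |z| - ∫ u in (0:ℝ)..z, h u ≤ z + (-2 * B' - ∫ u in (0:ℝ)..B', h u) := by
    intro z hz
    have hsplit : (∫ u in (0:ℝ)..z, h u) + ∫ u in z..B', h u = ∫ u in (0:ℝ)..B', h u :=
      integral_add_adjacent_intervals (hi 0 z) (hi z B')
    have hlow : (∫ u in z..B', h u) ≤ -2 * (B' - z) := by
      have := integral_mono_on hz (hi z B') (_root_.intervalIntegrable_const (c := (-2:ℝ)))
        (fun s hs => hB s (le_trans hs.2 (min_le_left _ _)))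
      simpa [mul_comm] using this
    have habs : |z| = -z := abs_of_nonpos (le_trans hz hB'0)
    nlinarith [hsplit, hlow]
  have hlim : Tendsto (fun z : ℝ => z + (-2 * B' - ∫ u in (0:ℝ)..B', h u)) atBot atBot :=
    tendsto_id.atBot_add tendsto_const_nhds
  exact tendsto_atBot_mono' _ (eventually_atBot.mpr ⟨B', key⟩) hlim

end

/-- if h is continuous, monotone nondecreasing, and unbounded in both
directions, features lie in [0,1]^d and outcomes in [0,1], then the pseudo
log-likelihood H_h attains a global maximum on ℝ^d. -/
theorem stmt_15 (d t : ℕ) (ht : 1 ≤ t)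
    (h : ℝ → ℝ) (hc : Continuous h) (hmono : Monotone h)
    (htop : Tendsto h atTop atTop) (hbot : Tendsto h atBot atBot)
    (x : Fin t → Fin d → ℝ) (hx : ∀ i k, x i k ∈ Set.Icc (0:ℝ) 1)
    (y : Fin t → ℝ) (hy : ∀ i, y i ∈ Set.Icc (0:ℝ) 1)
    (H : (Fin d → ℝ) → ℝ)
    (hH : ∀ θ : Fin d → ℝ, H θ = ∑ i, (y i * (∑ k, x i k * θ k)
      - ∫ u in (0:ℝ)..(∑ k, x i k * θ k), h u)) :
    ∃ θhat : Fin d → ℝ, ∀ θ : Fin d → ℝ, H θ ≤ H θhat := by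
  have hi : ∀ a b : ℝ, IntervalIntegrable h volume a b := fun a b =>
    hc.intervalIntegrable a b
  set m : ℝ → ℝ := fun s => ∫ u in (0:ℝ)..s, h u with hm
  have hmcont : Continuous m := intervalIntegral.continuous_primitive hi 0
  set q : ℝ → ℝ := fun s => |s| - m s with hq
  have hqcont : Continuous q := continuous_abs.sub hmcont
  have hqco : Tendsto q (cocompact ℝ) atBot := by
    rw [cocompact_eq_atBot_atTop, tendsto_sup]
    exact ⟨aux_q_atBot h hc hbot, aux_q_atTop h hc htop⟩
  obtain ⟨s₀, hs₀⟩ := hqcont.exists_forall_ge hqco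
  set C := max (q s₀) 0 with hC
  have hC0 : (0:ℝ) ≤ C := le_max_right _ _
  have hqC : ∀ s, q s ≤ C := fun s => (hs₀ s).trans (le_max_left _ _)
  set F : (Fin t → ℝ) → ℝ := fun z => ∑ i, (y i * z i - m (z i)) with hF
  have hFcont : Continuous F := continuous_finset_sum _ fun i _ =>
    (continuous_const.mul (continuous_apply i)).sub (hmcont.comp (continuous_apply i))
  have hFq : ∀ (z : Fin t → ℝ) i, y i * z i - m (z i) ≤ q (z i) := by
    intro z i
    have hyy := hy i
    have h1 : y i * z i ≤ |z i| := by
      calc y i * z i ≤ |y i * z i| := le_abs_self _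
        _ = |y i| * |z i| := abs_mul _ _
        _ ≤ 1 * |z i| :=
            mul_le_mul_of_nonneg_right
              (abs_le.mpr ⟨by linarith [hyy.1], hyy.2⟩) (abs_nonneg _)
        _ = |z i| := one_mul _
    simp only [hq]
    linarith
  have hFco : Tendsto F (cocompact (Fin t → ℝ)) atBot := by
    rw [tendsto_atBot]
    intro b
    obtain ⟨K₁, hK₁c, hK₁⟩ := mem_cocompact.mp
      (hqco.eventually (eventually_lt_atBot (b - t * C)))
    rw [eventually_iff, mem_cocompact]
    refine ⟨Set.pi Set.univ (fun _ => K₁), isCompact_univ_pi fun _ => hK₁c, ?_⟩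
    intro z hz
    simp only [Set.mem_compl_iff, Set.mem_pi, Set.mem_univ, forall_true_left,
      not_forall] at hz
    obtain ⟨i, hzi⟩ := hz
    have h1 : q (z i) < b - t * C := hK₁ hzi
    have h2 : F z ≤ ∑ j, q (z j) := Finset.sum_le_sum fun j _ => hFq z j
    have h3 : ∑ j, q (z j) = q (z i) + ∑ j ∈ Finset.univ.erase i, q (z j) :=
      (Finset.add_sum_erase _ _ (Finset.mem_univ i)).symm
    have h4 : ∑ j ∈ Finset.univ.erase i, q (z j) ≤ ((t - 1 : ℕ) : ℝ) * C := by
      have := Finset.sum_le_card_nsmul (Finset.univ.erase i) (fun j => q (z j)) C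
        (fun j _ => hqC _)
      simpa [Finset.card_erase_of_mem, nsmul_eq_mul] using this
    have h5 : ((t - 1 : ℕ) : ℝ) * C ≤ (t : ℝ) * C := by
      apply mul_le_mul_of_nonneg_right _ hC0
      exact_mod_cast Nat.sub_le t 1
    show F z ≤ b
    linarith
  set Φ : (Fin d → ℝ) →ₗ[ℝ] (Fin t → ℝ) :=
    Matrix.mulVecLin (Matrix.of fun i k => x i k) with hΦ
  have hΦapp : ∀ (θ : Fin d → ℝ) (i : Fin t), Φ θ i = ∑ k, x i k * θ k := by
    intro θ i
    simp [hΦ, Matrix.mulVecLin_apply, Matrix.mulVec, dotProduct]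
  set V : Submodule ℝ (Fin t → ℝ) := LinearMap.range Φ with hV
  have hVclosed : IsClosed (V : Set (Fin t → ℝ)) := Submodule.closed_of_finiteDimensional V
  have hemb := hVclosed.isClosedEmbedding_subtypeVal
  have hG : Continuous (fun w : V => F (w : Fin t → ℝ)) := hFcont.comp continuous_subtype_val
  have hGco : Tendsto (fun w : V => F (w : Fin t → ℝ)) (cocompact V) atBot :=
    hFco.comp hemb.tendsto_cocompact
  obtain ⟨w₀, hw₀⟩ := hG.exists_forall_ge hGco
  obtain ⟨θhat, hθhat⟩ := LinearMap.mem_range.mp w₀.2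
  refine ⟨θhat, fun θ => ?_⟩
  have hHF : ∀ θ' : Fin d → ℝ, H θ' = F (Φ θ') := by
    intro θ'
    rw [hH, hF]
    refine Finset.sum_congr rfl fun i _ => ?_
    rw [hΦapp]
  rw [hHF θ, hHF θhat, hθhat]
  exact hw₀ ⟨Φ θ, LinearMap.mem_range_self _ _⟩
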